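/- For strictly positive probability vectors p, q and the maximal-precision-recall set of Sajjadi et al.: a pair (π, ρ) ∈ (0,1]² is achievable (i.e., there exist probability vectors r, p', q' with p = ρr + (1−ρ)p' and q = πr + (1−π)q') if and only if there exists a probability vector r with ρ ≤ exp(−D_∞(r‖p)) and π ≤ exp(−D_∞(r‖q)), where D_∞(r‖p) = log max_i r_i/p_i. -/

import Mathlib

open Real

lemma simplex_exists_pos {n : ℕ} {r : Fin n → ℝ} (hr : r ∈ stdSimplex ℝ (Fin n)) :
    ∃ i, 0 < r i := by
  by_contra h
  push_neg at h
  have : ∑ i, r i = 0 := le_antisymm (Finset.sum_nonpos fun i _ => h i)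
    (Finset.sum_nonneg fun i _ => hr.1 i)
  rw [hr.2] at this; norm_num at this

lemma key_iff {n : ℕ} (hne : (Finset.univ : Finset (Fin n)).Nonempty)
    (p r : Fin n → ℝ) (hp0 : ∀ i, 0 < p i) (hr : r ∈ stdSimplex ℝ (Fin n))
    (c : ℝ) (hc : 0 < c) :
    c ≤ Real.exp (-(Real.log (Finset.univ.sup' hne fun i => r i / p i))) ↔
      ∀ i, c * r i ≤ p i := by
  obtain ⟨j, hj⟩ := simplex_exists_pos hr
  have hs : 0 < Finset.univ.sup' hne fun i => r i / p i :=
    lt_of_lt_of_le (div_pos hj (hp0 j)) (Finset.le_sup' (fun i => r i / p i) (Finset.mem_univ j))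
  rw [Real.exp_neg, Real.exp_log hs, le_inv_comm₀ hc hs, Finset.sup'_le_iff]
  simp only [Finset.mem_univ, true_implies]
  refine forall_congr' fun i => ?_
  rw [div_le_iff₀ (hp0 i)]
  constructor <;> intro h
  · have h2 : c * r i ≤ c * (c⁻¹ * p i) := mul_le_mul_of_nonneg_left h hc.le
    rwa [← mul_assoc, mul_inv_cancel₀ hc.ne', one_mul] at h2
  · calc r i = c⁻¹ * (c * r i) := by field_simp
    _ ≤ c⁻¹ * p i := by apply mul_le_mul_of_nonneg_left h (by positivity)
  -- cleanup
  -- (forall_congr through Finset.mem_univ)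

lemma decomp_exists {n : ℕ} (p r : Fin n → ℝ) (hp0 : ∀ i, 0 < p i) (hp1 : ∑ i, p i = 1)
    (hr : r ∈ stdSimplex ℝ (Fin n)) (c : ℝ) (hc : 0 < c) (hc1 : c ≤ 1)
    (h : ∀ i, c * r i ≤ p i) :
    ∃ p' ∈ stdSimplex ℝ (Fin n), ∀ i, p i = c * r i + (1 - c) * p' i := by
  rcases eq_or_lt_of_le hc1 with hc1 | hc1
  · -- c = 1, then r = p
    subst hc1
    have hrp : ∀ i, r i = p i := by
      have hsum : ∑ i, (p i - r i) = 0 := by rw [Finset.sum_sub_distrib, hp1, hr.2]; ring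
      have := (Finset.sum_eq_zero_iff_of_nonneg (fun i _ => by
        have := h i; simp only [one_mul] at this; linarith)).mp hsum
      intro i; have := this i (Finset.mem_univ i); linarith
    exact ⟨p, ⟨fun i => (hp0 i).le, hp1⟩, fun i => by rw [hrp i]; ring⟩
  · have h1c : (1:ℝ) - c ≠ 0 := by linarith
    refine ⟨fun i => (p i - c * r i) / (1 - c), ⟨fun i =>
      div_nonneg (by linarith [h i]) (by linarith), ?_⟩, fun i => by field_simp; ring⟩
    rw [← Finset.sum_div, Finset.sum_sub_distrib, ← Finset.mul_sum, hp1, hr.2]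
    field_simp

theorem prd_achievable_iff (n : ℕ) (hn : 0 < n) (p q : Fin n → ℝ)
    (hp0 : ∀ i, 0 < p i) (hp1 : ∑ i, p i = 1)
    (hq0 : ∀ i, 0 < q i) (hq1 : ∑ i, q i = 1)
    (prec rec : ℝ) (hprec0 : 0 < prec) (hprec1 : prec ≤ 1) (hrec0 : 0 < rec) (hrec1 : rec ≤ 1) :
    letI hne : (Finset.univ : Finset (Fin n)).Nonempty :=
      Finset.univ_nonempty_iff.mpr ⟨⟨0, hn⟩⟩
    ((∃ r p' q' : Fin n → ℝ,
        r ∈ stdSimplex ℝ (Fin n) ∧ p' ∈ stdSimplex ℝ (Fin n) ∧ q' ∈ stdSimplex ℝ (Fin n) ∧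
        (∀ i, p i = rec * r i + (1 - rec) * p' i) ∧
        (∀ i, q i = prec * r i + (1 - prec) * q' i)) ↔
      (∃ r : Fin n → ℝ, r ∈ stdSimplex ℝ (Fin n) ∧
        rec ≤ Real.exp (-(Real.log (Finset.univ.sup' hne fun i => r i / p i))) ∧
        prec ≤ Real.exp (-(Real.log (Finset.univ.sup' hne fun i => r i / q i))))) := by
  have hne : (Finset.univ : Finset (Fin n)).Nonempty :=
    Finset.univ_nonempty_iff.mpr ⟨⟨0, hn⟩⟩
  constructor
  · rintro ⟨r, p', q', hr, hp', hq', hpe, hqe⟩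
    refine ⟨r, hr, (key_iff hne p r hp0 hr rec hrec0).mpr fun i => ?_,
      (key_iff hne q r hq0 hr prec hprec0).mpr fun i => ?_⟩
    · have := hpe i
      nlinarith [hp'.1 i, hrec1]
    · have := hqe i
      nlinarith [hq'.1 i, hprec1]
  · rintro ⟨r, hr, h1, h2⟩
    obtain ⟨p', hp', hpe⟩ := decomp_exists p r hp0 hp1 hr rec hrec0 hrec1
      ((key_iff hne p r hp0 hr rec hrec0).mp h1)
    obtain ⟨q', hq', hqe⟩ := decomp_exists q r hq0 hq1 hr prec hprec0 hprec1
      ((key_iff hne q r hq0 hr prec hprec0).mp h2)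
    exact ⟨r, p', q', hr, hp', hq', hpe, hqe⟩
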